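/- Let G be a connected graph on n vertices with conductance function c, and let T be a spanning tree of G. Then the cyclic cover time satisfies CYC[G,c] ≤ 2·(∑_{e∈E} c(e))·(∑_{e∈T} R(e)), where R(e) is the effective resistance of edge e. -/

import Mathlib

open Finset

/-- `R` is the effective resistance between `u` and `v` in the electrical network with
conductances `c`: there is a potential `φ` satisfying Kirchhoff's current law at every vertex
other than `u, v`, with total current `1` flowing out of `u`, and `R = φ u - φ v`. -/
def IsEffRes {V : Type*} [Fintype V] (c : V → V → ℝ) (u v : V) (R : ℝ) : Prop :=
  ∃ φ : V → ℝ, (∀ w, w ≠ u → w ≠ v → ∑ x, c w x * (φ w - φ x) = 0) ∧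
    (∑ x, c u x * (φ u - φ x) = 1) ∧ R = φ u - φ v

/-- The sum of hitting times `H` along the cyclic ordering of the vertices given by `σ`;
the cyclic cover time is the minimum of this quantity over all `σ`. -/
noncomputable def cycSum {V : Type*} [Fintype V] (H : V → V → ℝ)
    (σ : Fin (Fintype.card V) ≃ V) : ℝ :=
  ∑ i, H (σ i) (σ ⟨(i.val + 1) % Fintype.card V, Nat.mod_lt _ i.pos⟩)

set_option linter.unusedSectionVars false

namespace CycAux

variable {V : Type*} [Fintype V] [DecidableEq V]

/-! ### Sums of `H` along lists -/

def chainSum (H : V → V → ℝ) : List V → ℝ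
  | [] => 0
  | [_] => 0
  | a :: b :: t => H a b + chainSum H (b :: t)

@[simp] lemma chainSum_nil (H : V → V → ℝ) : chainSum H [] = 0 := rfl
@[simp] lemma chainSum_single (H : V → V → ℝ) (a : V) : chainSum H [a] = 0 := rfl
lemma chainSum_cons_cons (H : V → V → ℝ) (a b : V) (t : List V) :
    chainSum H (a :: b :: t) = H a b + chainSum H (b :: t) := rfl

lemma chainSum_append_cons (H : V → V → ℝ) (p : V) :
    ∀ (xs ys : List V), chainSum H (xs ++ p :: ys) = chainSum H (xs ++ [p]) + chainSum H (p :: ys)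
  | [], ys => by simp
  | [a], ys => by simp [chainSum_cons_cons]
  | a :: b :: t, ys => by
    have ih := chainSum_append_cons H p (b :: t) ys
    simp only [List.cons_append, chainSum_cons_cons] at *
    rw [ih]; ring

lemma chainSum_eq_sum (H : V → V → ℝ) (v₀ : V) :
    ∀ l : List V, chainSum H l = ∑ i ∈ Finset.range (l.length - 1),
      H (l.getD i v₀) (l.getD (i + 1) v₀)
  | [] => by simp
  | [a] => by simp
  | a :: b :: t => by
    have ih := chainSum_eq_sum H v₀ (b :: t)
    simp only [chainSum_cons_cons, List.length_cons]
    rw [ih]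
    have hlen : t.length + 1 + 1 - 1 = (t.length + 1 - 1) + 1 := by omega
    rw [hlen, Finset.sum_range_succ']
    simp only [List.getD_cons_zero, List.getD_cons_succ, List.length_cons, add_tsub_cancel_right]
    rw [add_comm]

lemma insert_le (H : V → V → ℝ) (hnn : ∀ a b, 0 ≤ H a b)
    (htri : ∀ a b c, H a c ≤ H a b + H b c) (p ℓ : V) (xs zs : List V) :
    chainSum H (xs ++ p :: ℓ :: zs) ≤ chainSum H (xs ++ p :: zs) + (H p ℓ + H ℓ p) := by
  rw [chainSum_append_cons H p xs (ℓ :: zs), chainSum_append_cons H p xs zs]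
  have : chainSum H (p :: ℓ :: zs) ≤ chainSum H (p :: zs) + (H p ℓ + H ℓ p) := by
    cases zs with
    | nil =>
      simp only [chainSum_cons_cons, chainSum_single]
      have := hnn ℓ p; linarith
    | cons z zs' =>
      simp only [chainSum_cons_cons]
      linarith [htri ℓ p z]
  linarith

lemma take_one (l : List V) (hl : l ≠ []) (v₀ : V) : l.take 1 = [l.getD 0 v₀] := by
  cases l with
  | nil => exact absurd rfl hl
  | cons a t => simp

lemma cyc_sum_eq (H : V → V → ℝ) (l : List V) (hl : l ≠ []) (v₀ : V) :
    ∑ i ∈ Finset.range l.length, H (l.getD i v₀) (l.getD ((i + 1) % l.length) v₀)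
      = chainSum H (l ++ l.take 1) := by
  have hlp : 0 < l.length := List.length_pos_iff.2 hl
  rw [take_one l hl v₀, chainSum_eq_sum H v₀]
  have hlen : (l ++ [l.getD 0 v₀]).length - 1 = l.length := by simp
  rw [hlen]
  refine Finset.sum_congr rfl fun i hi => ?_
  rw [Finset.mem_range] at hi
  have e1 : (l ++ [l.getD 0 v₀]).getD i v₀ = l.getD i v₀ := List.getD_append _ _ _ _ hi
  rw [e1]
  congr 1
  rcases Nat.lt_or_ge (i + 1) l.length with h | h
  · rw [Nat.mod_eq_of_lt h]
    exact (List.getD_append _ _ _ _ h).symm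
  · have hieq : i + 1 = l.length := by omega
    rw [hieq, Nat.mod_self]
    rw [List.getD_append_right _ _ _ _ (le_refl _)]
    simp

/-! ### Harmonic function machinery -/

lemma eq_of_mean {P : V → ℝ} {g : V → ℝ} {M : ℝ}
    (hp : ∀ x, 0 ≤ P x) (hs : ∑ x, P x = 1) (hg : ∀ x, M ≤ g x)
    (hw : ∑ x, P x * g x = M) : ∀ x, 0 < P x → g x = M := by
  have hz : ∑ x, P x * (g x - M) = 0 := by
    have : ∑ x, P x * (g x - M) = (∑ x, P x * g x) - M * ∑ x, P x := by
      rw [Finset.mul_sum, ← Finset.sum_sub_distrib]; congr 1; ext x; ring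
    rw [this, hs, hw]; ring
  have hnn : ∀ x ∈ Finset.univ, (0:ℝ) ≤ P x * (g x - M) := fun x _ =>
    mul_nonneg (hp x) (by linarith [hg x])
  intro x hx
  have := (Finset.sum_eq_zero_iff_of_nonneg hnn).1 hz x (Finset.mem_univ x)
  have h2 : g x - M = 0 := by
    rcases mul_eq_zero.1 this with h | h
    · exact absurd h (ne_of_gt hx)
    · exact h
  linarith

lemma mean_ge {P : V → ℝ} {g : V → ℝ} {M : ℝ}
    (hp : ∀ x, 0 ≤ P x) (hs : ∑ x, P x = 1) (hg : ∀ x, M ≤ g x) :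
    M ≤ ∑ x, P x * g x := by
  calc M = ∑ x, P x * M := by rw [← Finset.sum_mul, hs, one_mul]
  _ ≤ ∑ x, P x * g x :=
    Finset.sum_le_sum fun x _ => mul_le_mul_of_nonneg_left (hg x) (hp x)

variable {r : V → V → Prop} {P : V → V → ℝ}

lemma nonneg_of_harmonic [Nonempty V]
    (hp : ∀ w x, 0 ≤ P w x) (hrow : ∀ w, ∑ x, P w x = 1)
    (hPr : ∀ w x, r w x → 0 < P w x)
    (hconn : ∀ u v, Relation.ReflTransGen r u v)
    (g : V → ℝ) (b c : V)
    (hharm : ∀ w, w ≠ b → w ≠ c → g w = ∑ x, P w x * g x)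
    (hgb : 0 ≤ g b) (hgc : 0 ≤ g c) : ∀ a, 0 ≤ g a := by
  obtain ⟨w₀, -, hmin⟩ := Finset.exists_min_image Finset.univ g Finset.univ_nonempty
  have hmin' : ∀ x, g w₀ ≤ g x := fun x => hmin x (Finset.mem_univ x)
  suffices h : 0 ≤ g w₀ by intro a; linarith [hmin' a]
  have key : ∀ w (h : Relation.ReflTransGen r w b), g w = g w₀ → 0 ≤ g w₀ := by
    intro w h
    induction h using Relation.ReflTransGen.head_induction_on with
    | refl => intro he; rw [← he]; exact hgb
    | @head a x hax hxb ih =>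
      intro ha
      by_cases hab : a = b
      · rw [hab] at ha; rw [← ha]; exact hgb
      by_cases hac : a = c
      · rw [hac] at ha; rw [← ha]; exact hgc
      · have hharm' : ∑ y, P a y * g y = g w₀ := by rw [← hharm a hab hac, ha]
        have := eq_of_mean (hp a) (hrow a) hmin' hharm' x (hPr a x hax)
        exact ih this
  exact key w₀ (hconn w₀ b) rfl

lemma const_of_harmonic [Nonempty V]
    (hp : ∀ w x, 0 ≤ P w x) (hrow : ∀ w, ∑ x, P w x = 1)
    (hPr : ∀ w x, r w x → 0 < P w x)
    (hconn : ∀ u v, Relation.ReflTransGen r u v)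
    (g : V → ℝ) (hharm : ∀ w, g w = ∑ x, P w x * g x) :
    ∀ u v, g u = g v := by
  obtain ⟨w₀, -, hmin⟩ := Finset.exists_min_image Finset.univ g Finset.univ_nonempty
  have hmin' : ∀ x, g w₀ ≤ g x := fun x => hmin x (Finset.mem_univ x)
  have key : ∀ w, Relation.ReflTransGen r w₀ w → g w = g w₀ := by
    intro w h
    induction h with
    | refl => rfl
    | @tail a x hax hrx ih =>
      have hharm' : ∑ y, P a y * g y = g w₀ := by rw [← hharm a, ih]
      exact eq_of_mean (hp a) (hrow a) hmin' hharm' x (hPr a x hrx)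
  intro u v; rw [key u (hconn w₀ u), key v (hconn w₀ v)]

lemma H_nonneg [Nonempty V]
    (hp : ∀ w x, 0 ≤ P w x) (hrow : ∀ w, ∑ x, P w x = 1)
    (H : V → V → ℝ) (hH0 : ∀ v, H v v = 0)
    (hH : ∀ u v, u ≠ v → H u v = 1 + ∑ w, P u w * H w v) :
    ∀ u v, 0 ≤ H u v := by
  intro u v
  obtain ⟨w₀, -, hmin⟩ := Finset.exists_min_image Finset.univ (fun w => H w v)
    Finset.univ_nonempty
  have hmin' : ∀ x, H w₀ v ≤ H x v := fun x => hmin x (Finset.mem_univ x)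
  have h0 : 0 ≤ H w₀ v := by
    by_cases hwv : w₀ = v
    · rw [hwv, hH0]
    · exfalso
      have := hH w₀ v hwv
      have h1 : H w₀ v ≤ ∑ w, P w₀ w * H w v := mean_ge (hp w₀) (hrow w₀) hmin'
      linarith
  linarith [hmin' u]

lemma H_triangle [Nonempty V]
    (hp : ∀ w x, 0 ≤ P w x) (hrow : ∀ w, ∑ x, P w x = 1)
    (hPr : ∀ w x, r w x → 0 < P w x)
    (hconn : ∀ u v, Relation.ReflTransGen r u v)
    (H : V → V → ℝ) (hH0 : ∀ v, H v v = 0)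
    (hH : ∀ u v, u ≠ v → H u v = 1 + ∑ w, P u w * H w v) :
    ∀ a b c, H a c ≤ H a b + H b c := by
  intro a b c
  have hnn := H_nonneg hp hrow H hH0 hH
  by_cases hbc : b = c
  · subst hbc; rw [hH0]; linarith
  have key : ∀ w, 0 ≤ H w b + H b c - H w c := by
    apply nonneg_of_harmonic hp hrow hPr hconn _ b c
    · intro w hwb hwc
      rw [hH w b hwb, hH w c hwc]
      have : ∑ x, P w x * (H x b + H b c - H x c)
          = (∑ x, P w x * H x b) + H b c * (∑ x, P w x) - ∑ x, P w x * H x c := by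
        have e1 : ∀ x, P w x * (H x b + H b c - H x c)
            = (P w x * H x b + H b c * P w x) - P w x * H x c := fun x => by ring
        simp only [e1]
        rw [Finset.sum_sub_distrib, Finset.sum_add_distrib, ← Finset.mul_sum]
      rw [this, hrow w]; ring
    · rw [hH0]; ring_nf; exact le_refl 0
    · have := hnn c b; have := hnn b c; simp [hH0]; linarith
  linarith [key a]

/-! ### The commute-time identity -/

lemma Del_expand (d : V → V → ℝ) (w : V) (f : V → ℝ) :
    ∑ x, d w x * (f w - f x) = (∑ x, d w x) * f w - ∑ x, d w x * f x := by
  rw [Finset.sum_mul, ← Finset.sum_sub_distrib]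
  exact Finset.sum_congr rfl fun x _ => by ring

lemma sum_Del_zero (d : V → V → ℝ) (hsymm : ∀ a b, d a b = d b a) (f : V → ℝ) :
    ∑ w, ∑ x, d w x * (f w - f x) = 0 := by
  have e1 : ∀ w, ∑ x, d w x * (f w - f x) = (∑ x, d w x * f w) - ∑ x, d w x * f x := by
    intro w; rw [← Finset.sum_sub_distrib]; congr 1; ext x; ring
  simp only [e1]
  rw [Finset.sum_sub_distrib, sub_eq_zero]
  rw [Finset.sum_comm]
  congr 1; ext w; congr 1; ext x; rw [hsymm]

section
variable (d : V → V → ℝ)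

lemma Del_H (hDpos : ∀ w, 0 < ∑ x, d w x)
    (H : V → V → ℝ)
    (hH : ∀ u v, u ≠ v → H u v = 1 + ∑ w, (d u w / ∑ x, d u x) * H w v)
    (v w : V) (hwv : w ≠ v) :
    ∑ x, d w x * (H w v - H x v) = ∑ x, d w x := by
  have hD := hDpos w
  have h1 := hH w v hwv
  have h2 : ∑ x, (d w x / ∑ y, d w y) * H x v = (∑ x, d w x * H x v) / ∑ y, d w y := by
    rw [Finset.sum_div]; congr 1; ext x; ring
  rw [h2] at h1
  have h3 : ∑ x, d w x * H x v = (∑ y, d w y) * (H w v - 1) := by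
    field_simp at h1; linarith
  rw [Del_expand d w (fun z => H z v), h3]; ring

lemma commute_identity (hsymm : ∀ a b, d a b = d b a) (hnn : ∀ a b, 0 ≤ d a b)
    (hDpos : ∀ w, 0 < ∑ x, d w x)
    (hconn : ∀ u v, Relation.ReflTransGen (fun a b => 0 < d a b) u v)
    (H : V → V → ℝ) (hH0 : ∀ v, H v v = 0)
    (hH : ∀ u v, u ≠ v → H u v = 1 + ∑ w, (d u w / ∑ x, d u x) * H w v)
    (u v : V) (huv : u ≠ v) (R : ℝ) (hR : IsEffRes d u v R) :
    H u v + H v u = (∑ w, ∑ x, d w x) * R := by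
  have : Nonempty V := ⟨u⟩
  set m2 := ∑ w, ∑ x, d w x with hm2
  have hm2pos : 0 < m2 := Finset.sum_pos (fun w _ => hDpos w) Finset.univ_nonempty
  set φ : V → ℝ := fun w => (H w v - H w u) / m2 with hφ
  have hlin : ∀ w, (∑ x, d w x * (φ w - φ x)) * m2
      = (∑ x, d w x * (H w v - H x v)) - ∑ x, d w x * (H w u - H x u) := by
    intro w
    rw [Finset.sum_mul, ← Finset.sum_sub_distrib]
    refine Finset.sum_congr rfl fun x _ => ?_
    simp only [hφ]
    field_simp
    ring
  have hm2ne : m2 ≠ 0 := ne_of_gt hm2pos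
  have hφharm : ∀ w, w ≠ u → w ≠ v → ∑ x, d w x * (φ w - φ x) = 0 := by
    intro w hwu hwv
    have h := hlin w
    rw [Del_H d hDpos H hH v w hwv, Del_H d hDpos H hH u w hwu] at h
    have : (∑ x, d w x * (φ w - φ x)) * m2 = 0 := by rw [h]; ring
    exact (mul_eq_zero.1 this).resolve_right hm2ne
  have hDelu : ∑ x, d u x * (H u u - H x u) = (∑ x, d u x) - m2 := by
    have htot := sum_Del_zero d hsymm (fun w => H w u)
    have hsplit : ∑ w, ∑ x, d w x * (H w u - H x u)
        = (∑ x, d u x * (H u u - H x u)) + ∑ w ∈ Finset.univ.erase u, ∑ x, d w x * (H w u - H x u) := by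
      rw [add_comm, Finset.sum_erase_add _ _ (Finset.mem_univ u)]
    have hrest : ∑ w ∈ Finset.univ.erase u, ∑ x, d w x * (H w u - H x u)
        = ∑ w ∈ Finset.univ.erase u, ∑ x, d w x := by
      refine Finset.sum_congr rfl fun w hw => ?_
      exact Del_H d hDpos H hH u w (Finset.ne_of_mem_erase hw)
    have hm2split : m2 = (∑ x, d u x) + ∑ w ∈ Finset.univ.erase u, ∑ x, d w x := by
      rw [hm2, add_comm, Finset.sum_erase_add _ _ (Finset.mem_univ u)]
    rw [hsplit, hrest] at htot
    linarith [hm2split]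
  have hφu : ∑ x, d u x * (φ u - φ x) = 1 := by
    have h := hlin u
    rw [Del_H d hDpos H hH v u huv, hDelu] at h
    have h2 : (∑ x, d u x * (φ u - φ x)) * m2 = 1 * m2 := by rw [h]; ring
    exact mul_right_cancel₀ hm2ne h2
  obtain ⟨φ', hφ'harm, hφ'u, hRdef⟩ := hR
  set ψ : V → ℝ := fun w => φ w - φ' w with hψdef
  have hψlin : ∀ w, ∑ x, d w x * (ψ w - ψ x)
      = (∑ x, d w x * (φ w - φ x)) - ∑ x, d w x * (φ' w - φ' x) := by
    intro w
    rw [← Finset.sum_sub_distrib]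
    congr 1; ext x; simp only [hψdef]; ring
  have hψharm0 : ∀ w, ∑ x, d w x * (ψ w - ψ x) = 0 := by
    have hψu : ∑ x, d u x * (ψ u - ψ x) = 0 := by rw [hψlin u, hφu, hφ'u]; ring
    intro w
    by_cases hwu : w = u
    · rw [hwu]; exact hψu
    by_cases hwv : w = v
    · subst hwv
      have htot := sum_Del_zero d hsymm ψ
      have hsplit : ∑ w', ∑ x, d w' x * (ψ w' - ψ x)
          = (∑ x, d w x * (ψ w - ψ x)) + ∑ w' ∈ Finset.univ.erase w, ∑ x, d w' x * (ψ w' - ψ x) := by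
        rw [add_comm, Finset.sum_erase_add _ _ (Finset.mem_univ w)]
      have hrest : ∑ w' ∈ Finset.univ.erase w, ∑ x, d w' x * (ψ w' - ψ x) = 0 := by
        refine Finset.sum_eq_zero fun w' hw' => ?_
        by_cases hwu' : w' = u
        · rw [hwu']; exact hψu
        · rw [hψlin w', hφharm w' hwu' (Finset.ne_of_mem_erase hw'),
            hφ'harm w' hwu' (Finset.ne_of_mem_erase hw')]; ring
      rw [hsplit, hrest] at htot; linarith
    · rw [hψlin w, hφharm w hwu hwv, hφ'harm w hwu hwv]; ring
  have hψmean : ∀ w, ψ w = ∑ x, (d w x / ∑ y, d w y) * ψ x := by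
    intro w
    have h0 := hψharm0 w
    have h1 : (∑ x, d w x) * ψ w = ∑ x, d w x * ψ x := by
      rw [Del_expand] at h0; linarith
    have h2 : ∑ x, (d w x / ∑ y, d w y) * ψ x = (∑ x, d w x * ψ x) / ∑ y, d w y := by
      rw [Finset.sum_div]; congr 1; ext x; ring
    rw [h2, ← h1, mul_comm, mul_div_assoc, div_self (ne_of_gt (hDpos w)), mul_one]
  have hconst := const_of_harmonic (P := fun w x => d w x / ∑ y, d w y)
    (r := fun a b => 0 < d a b)
    (fun w x => div_nonneg (hnn w x) (le_of_lt (hDpos w)))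
    (fun w => by rw [← Finset.sum_div]; exact div_self (ne_of_gt (hDpos w)))
    (fun w x hwx => div_pos hwx (hDpos w))
    hconn ψ hψmean
  have hψuv : ψ u = ψ v := hconst u v
  have huv' : φ u - φ v = R := by
    rw [hRdef]
    have : φ u - φ' u = φ v - φ' v := hψuv
    linarith
  have heq : φ u - φ v = (H u v + H v u) / m2 := by
    simp only [hφ, hH0]
    field_simp
    ring
  rw [heq] at huv'
  field_simp at huv'
  linarith [huv']
end

/-! ### The weighted handshake lemma -/

lemma handshake (G : SimpleGraph V) [DecidableRel G.Adj] (c : Sym2 V → ℝ) :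
    ∑ w, ∑ x, (if G.Adj w x then c s(w, x) else 0) = 2 * ∑ e ∈ G.edgeFinset, c e := by
  have h1 : ∑ w, ∑ x, (if G.Adj w x then c s(w, x) else 0)
      = ∑ p ∈ (Finset.univ ×ˢ Finset.univ).filter (fun p : V × V => G.Adj p.1 p.2),
          c s(p.1, p.2) := by
    rw [Finset.sum_filter, ← Finset.sum_product']
  rw [h1, ← Finset.sum_fiberwise ((Finset.univ ×ˢ Finset.univ).filter
      (fun p : V × V => G.Adj p.1 p.2)) (fun p => s(p.1, p.2)) (fun p => c s(p.1, p.2))]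
  have h2 : ∀ e : Sym2 V,
      ∑ p ∈ ((Finset.univ ×ˢ Finset.univ).filter (fun p : V × V => G.Adj p.1 p.2)).filter
          (fun p => s(p.1, p.2) = e), c s(p.1, p.2)
      = if e ∈ G.edgeFinset then 2 * c e else 0 := by
    intro e
    induction e using Sym2.ind with
    | _ a b =>
      by_cases hab : G.Adj a b
      · rw [if_pos (by rwa [SimpleGraph.mem_edgeFinset, SimpleGraph.mem_edgeSet])]
        have hfib : ((Finset.univ ×ˢ Finset.univ).filter (fun p : V × V => G.Adj p.1 p.2)).filter
            (fun p => s(p.1, p.2) = s(a, b)) = {(a, b), (b, a)} := by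
          ext ⟨x, y⟩
          simp only [Finset.mem_filter, Finset.mem_product, Finset.mem_univ, true_and,
            Finset.mem_insert, Finset.mem_singleton, Prod.mk.injEq, Sym2.eq_iff]
          constructor
          · rintro ⟨-, (⟨rfl, rfl⟩ | ⟨rfl, rfl⟩)⟩
            · exact Or.inl ⟨rfl, rfl⟩
            · exact Or.inr ⟨rfl, rfl⟩
          · rintro (⟨rfl, rfl⟩ | ⟨rfl, rfl⟩)
            · exact ⟨hab, Or.inl ⟨rfl, rfl⟩⟩
            · exact ⟨hab.symm, Or.inr ⟨rfl, rfl⟩⟩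
        rw [hfib]
        have hne : ((a, b) : V × V) ≠ (b, a) := by
          intro h
          exact G.ne_of_adj hab (congrArg Prod.fst h)
        rw [Finset.sum_pair hne]
        have : s(b, a) = s(a, b) := Sym2.eq_swap
        rw [this]; ring
      · rw [if_neg (by rwa [SimpleGraph.mem_edgeFinset, SimpleGraph.mem_edgeSet])]
        apply Finset.sum_eq_zero
        rintro ⟨x, y⟩ hxy
        simp only [Finset.mem_filter, Finset.mem_product, Finset.mem_univ, true_and,
          Sym2.eq_iff] at hxy
        rcases hxy with ⟨hadj, (⟨rfl, rfl⟩ | ⟨rfl, rfl⟩)⟩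
        · exact absurd hadj hab
        · exact absurd hadj.symm hab
  rw [Finset.sum_congr rfl (fun e _ => h2 e)]
  rw [Finset.sum_ite_mem, Finset.univ_inter, Finset.mul_sum]

/-! ### Leaf-removal induction for trees -/

lemma tree_list (H : V → V → ℝ) (hdiag : ∀ v, H v v = 0) (hnn : ∀ a b, 0 ≤ H a b)
    (htri : ∀ a b c, H a c ≤ H a b + H b c) :
    ∀ (n : ℕ) (S : Finset V) (T' : Finset (Sym2 V)), S.card = n → S.Nonempty →
    (∀ e ∈ T', ∃ a b, a ≠ b ∧ a ∈ S ∧ b ∈ S ∧ e = s(a, b)) →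
    (∀ u ∈ S, ∀ v ∈ S, Relation.ReflTransGen (fun a b => s(a, b) ∈ T') u v) →
    T'.card + 1 = S.card →
    ∃ l : List V, l ≠ [] ∧ l.Nodup ∧ l.toFinset = S ∧
      chainSum H (l ++ l.take 1)
        ≤ ∑ e ∈ T', Sym2.lift ⟨fun u v => H u v + H v u, fun _ _ => by ring⟩ e := by
  intro n
  induction n using Nat.strong_induction_on with
  | _ n IH =>
  intro S T' hcard hne hedge hconn hcount
  rcases Nat.lt_or_ge S.card 2 with hS1 | hS2
  · -- S is a singleton
    have h1 : S.card = 1 := by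
      have := Finset.card_pos.2 hne; omega
    obtain ⟨v, hv⟩ := Finset.card_eq_one.1 h1
    have hT0 : T' = ∅ := by
      have : T'.card = 0 := by omega
      exact Finset.card_eq_zero.1 this
    refine ⟨[v], by simp, by simp, by simp [hv], ?_⟩
    simp [hT0, chainSum, hdiag]
  · -- degree counting: find a leaf ℓ
    have hdegsum : ∑ w ∈ S, (T'.filter (fun e => w ∈ e)).card = 2 * T'.card := by
      have h1 : ∀ w, (T'.filter (fun e => w ∈ e)).card
          = ∑ e ∈ T', (if w ∈ e then 1 else 0) := fun w => Finset.card_filter _ _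
      simp only [h1]
      rw [Finset.sum_comm]
      have h2 : ∀ e ∈ T', ∑ w ∈ S, (if w ∈ e then 1 else 0) = 2 := by
        intro e he
        obtain ⟨a, b, hab, haS, hbS, rfl⟩ := hedge e he
        have hfil : S.filter (fun w => w ∈ (s(a, b) : Sym2 V)) = {a, b} := by
          ext w
          simp only [Finset.mem_filter, Sym2.mem_iff, Finset.mem_insert,
            Finset.mem_singleton]
          constructor
          · rintro ⟨-, h | h⟩ <;> [left; right] <;> exact h
          · rintro (rfl | rfl)
            · exact ⟨haS, Or.inl rfl⟩
            · exact ⟨hbS, Or.inr rfl⟩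
        rw [← Finset.card_filter, hfil, Finset.card_pair hab]
      rw [Finset.sum_congr rfl h2, Finset.sum_const, smul_eq_mul, mul_comm]
    have hdegpos : ∀ w ∈ S, 1 ≤ (T'.filter (fun e => w ∈ e)).card := by
      intro w hw
      obtain ⟨t, htS, htw⟩ := Finset.exists_mem_ne hS2 w
      rcases (hconn w hw t htS).cases_head with h | ⟨x, hx, -⟩
      · exact absurd h.symm htw
      · refine Finset.card_pos.2 ⟨s(w, x), Finset.mem_filter.2 ⟨hx, ?_⟩⟩
        exact Sym2.mem_mk_left w x
    have hleaf : ∃ ℓ ∈ S, (T'.filter (fun e => ℓ ∈ e)).card = 1 := by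
      by_contra hno
      push_neg at hno
      have h2 : ∀ w ∈ S, 2 ≤ (T'.filter (fun e => w ∈ e)).card := by
        intro w hw
        have := hdegpos w hw
        have := hno w hw
        omega
      have := Finset.card_nsmul_le_sum S (fun w => (T'.filter (fun e => w ∈ e)).card) 2 h2
      simp only [smul_eq_mul] at this
      rw [hdegsum] at this
      omega
    obtain ⟨ℓ, hℓS, hℓdeg⟩ := hleaf
    obtain ⟨e₀, he₀⟩ := Finset.card_eq_one.1 hℓdeg
    have he₀mem : e₀ ∈ T' ∧ ℓ ∈ e₀ := by
      have : e₀ ∈ T'.filter (fun e => ℓ ∈ e) := by rw [he₀]; exact Finset.mem_singleton_self e₀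
      exact Finset.mem_filter.1 this
    have hfilter : ∀ e ∈ T', ℓ ∈ e → e = e₀ := by
      intro e he hℓe
      have : e ∈ T'.filter (fun e => ℓ ∈ e) := Finset.mem_filter.2 ⟨he, hℓe⟩
      rw [he₀] at this
      exact Finset.mem_singleton.1 this
    obtain ⟨a, b, hab, haS, hbS, he₀eq⟩ := hedge e₀ he₀mem.1
    have hℓab : ℓ = a ∨ ℓ = b := by
      have := he₀mem.2; rw [he₀eq] at this; exact Sym2.mem_iff.1 this
    obtain ⟨p, hpS, hpℓ, he₀p⟩ : ∃ p, p ∈ S ∧ p ≠ ℓ ∧ e₀ = s(ℓ, p) := by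
      rcases hℓab with rfl | rfl
      · exact ⟨b, hbS, fun h => hab h.symm, he₀eq⟩
      · exact ⟨a, haS, fun h => hab h, by rw [he₀eq, Sym2.eq_swap]⟩
    set S' := S.erase ℓ with hS'
    set T'' := T'.erase e₀ with hT''
    have hScard : S'.card = S.card - 1 := Finset.card_erase_of_mem hℓS
    have hTcard : T''.card = T'.card - 1 := Finset.card_erase_of_mem he₀mem.1
    have hT'pos : 1 ≤ T'.card := Finset.card_pos.2 ⟨e₀, he₀mem.1⟩
    have hpS' : p ∈ S' := Finset.mem_erase.2 ⟨hpℓ, hpS⟩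
    have hedge'' : ∀ e ∈ T'', ∃ a b, a ≠ b ∧ a ∈ S' ∧ b ∈ S' ∧ e = s(a, b) := by
      intro e he
      have heT' : e ∈ T' := Finset.mem_of_mem_erase he
      obtain ⟨a', b', hab', haS', hbS', rfl⟩ := hedge e heT'
      have hene₀ : s(a', b') ≠ e₀ := Finset.ne_of_mem_erase he
      have ha'ℓ : a' ≠ ℓ := by
        rintro rfl
        exact hene₀ (hfilter _ heT' (Sym2.mem_mk_left _ _))
      have hb'ℓ : b' ≠ ℓ := by
        rintro rfl
        exact hene₀ (hfilter _ heT' (Sym2.mem_mk_right _ _))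
      exact ⟨a', b', hab', Finset.mem_erase.2 ⟨ha'ℓ, haS'⟩,
        Finset.mem_erase.2 ⟨hb'ℓ, hbS'⟩, rfl⟩
    have hstep : ∀ x y : V, s(x, y) ∈ T' →
        Relation.ReflTransGen (fun a b => s(a, b) ∈ T'')
          (if x = ℓ then p else x) (if y = ℓ then p else y) := by
      intro x y hxy
      by_cases hx : x = ℓ
      · subst hx
        have := hfilter _ hxy (Sym2.mem_mk_left _ _)
        rw [he₀p] at this
        rcases Sym2.eq_iff.1 this with ⟨-, h1⟩ | ⟨h1, -⟩
        · rw [if_pos rfl, h1, if_neg hpℓ]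
        · exact absurd h1.symm hpℓ
      by_cases hy : y = ℓ
      · subst hy
        have := hfilter _ hxy (Sym2.mem_mk_right _ _)
        rw [he₀p] at this
        rcases Sym2.eq_iff.1 this with ⟨h1, -⟩ | ⟨h1, -⟩
        · exact absurd h1 hx
        · rw [if_neg hx, if_pos rfl, h1]
      · have hne : s(x, y) ≠ e₀ := by
          rw [he₀p]
          intro h
          rcases Sym2.eq_iff.1 h with ⟨rfl, -⟩ | ⟨-, rfl⟩
          · exact hx rfl
          · exact hy rfl
        simp only [if_neg hx, if_neg hy]
        exact Relation.ReflTransGen.single (Finset.mem_erase.2 ⟨hne, hxy⟩)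
    have hconn'' : ∀ u ∈ S', ∀ v ∈ S',
        Relation.ReflTransGen (fun a b => s(a, b) ∈ T'') u v := by
      intro u hu v hv
      have huS : u ∈ S := Finset.mem_of_mem_erase hu
      have hvS : v ∈ S := Finset.mem_of_mem_erase hv
      have huℓ : u ≠ ℓ := Finset.ne_of_mem_erase hu
      have hvℓ : v ≠ ℓ := Finset.ne_of_mem_erase hv
      have hlift : ∀ x y : V, Relation.ReflTransGen (fun a b => s(a, b) ∈ T') x y →
          Relation.ReflTransGen (fun a b => s(a, b) ∈ T'')
            (if x = ℓ then p else x) (if y = ℓ then p else y) := by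
        intro x y h
        induction h with
        | refl => exact Relation.ReflTransGen.refl
        | tail _ hstep' ih => exact ih.trans (hstep _ _ hstep')
      have := hlift u v (hconn u huS v hvS)
      rwa [if_neg huℓ, if_neg hvℓ] at this
    have hScard' : S'.card < n := by omega
    have hne' : S'.Nonempty := ⟨p, hpS'⟩
    have hcount' : T''.card + 1 = S'.card := by omega
    obtain ⟨l', hl'ne, hl'nd, hl'fin, hl'sum⟩ :=
      IH S'.card hScard' S' T'' rfl hne' hedge'' hconn'' hcount'
    have hpl' : p ∈ l' := by rw [← List.mem_toFinset, hl'fin]; exact hpS'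
    obtain ⟨xs, ys, rfl⟩ := List.append_of_mem hpl'
    have hℓnotl' : ℓ ∉ xs ++ p :: ys := by
      rw [← List.mem_toFinset, hl'fin]
      exact Finset.notMem_erase ℓ S
    have hassoc : xs ++ p :: ℓ :: ys = (xs ++ [p]) ++ ℓ :: ys := by simp
    have hperm : (xs ++ p :: ℓ :: ys).Perm (ℓ :: (xs ++ p :: ys)) := by
      rw [hassoc]
      have h1 := List.perm_middle (a := ℓ) (l₁ := xs ++ [p]) (l₂ := ys)
      simpa using h1
    refine ⟨xs ++ p :: ℓ :: ys, by simp, ?_, ?_, ?_⟩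
    · exact hperm.nodup_iff.2 (List.nodup_cons.2 ⟨hℓnotl', hl'nd⟩)
    · ext x
      rw [List.mem_toFinset, hperm.mem_iff, List.mem_cons, ← List.mem_toFinset, hl'fin]
      constructor
      · rintro (rfl | hx)
        · exact hℓS
        · exact Finset.mem_of_mem_erase hx
      · intro hx
        by_cases hxℓ : x = ℓ
        · exact Or.inl hxℓ
        · exact Or.inr (Finset.mem_erase.2 ⟨hxℓ, hx⟩)
    · have htake : (xs ++ p :: ℓ :: ys).take 1 = (xs ++ p :: ys).take 1 := by
        cases xs <;> simp
      rw [htake]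
      set t1 := (xs ++ p :: ys).take 1 with ht1
      have h1 : (xs ++ p :: ℓ :: ys) ++ t1 = xs ++ p :: ℓ :: (ys ++ t1) := by simp
      have h2 : (xs ++ p :: ys) ++ t1 = xs ++ p :: (ys ++ t1) := by simp
      rw [h1]
      have h3 := insert_le H hnn htri p ℓ xs (ys ++ t1)
      rw [← h2] at h3
      have hCe₀ : (Sym2.lift ⟨fun u v => H u v + H v u, fun _ _ => by ring⟩ : Sym2 V → ℝ) e₀
          = H p ℓ + H ℓ p := by
        rw [he₀p, Sym2.lift_mk]
        ring
      have h4 := Finset.sum_erase_add T'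
        (Sym2.lift ⟨fun u v => H u v + H v u, fun _ _ => by ring⟩ : Sym2 V → ℝ) he₀mem.1
      rw [← hT''] at h4
      calc chainSum H (xs ++ p :: ℓ :: (ys ++ t1))
          ≤ chainSum H ((xs ++ p :: ys) ++ t1) + (H p ℓ + H ℓ p) := h3
        _ ≤ (∑ e ∈ T'', Sym2.lift ⟨fun u v => H u v + H v u, fun _ _ => by ring⟩ e)
            + (H p ℓ + H ℓ p) := by linarith [hl'sum]
        _ = ∑ e ∈ T', Sym2.lift ⟨fun u v => H u v + H v u, fun _ _ => by ring⟩ e := by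
            rw [← h4, hCe₀]

end CycAux

/-- For a connected graph `G` with conductance function `c` (positive on edges) and any
spanning tree `T` of `G`, the cyclic cover time of the associated random walk is at most
`2 (∑_{e ∈ E} c(e)) (∑_{e ∈ T} R(e))`, where `R(e)` is the effective resistance of edge `e`
and `H` is the hitting-time function of the walk with transitions proportional to the
conductances. -/
theorem cyclic_cover_time_le_conductance_mul_tree_resistance
    {V : Type*} [Fintype V] [DecidableEq V]
    (G : SimpleGraph V) [DecidableRel G.Adj] (hG : G.Connected)
    (c : Sym2 V → ℝ) (hc : ∀ e ∈ G.edgeSet, 0 < c e)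
    (R : Sym2 V → ℝ)
    (hR : ∀ u v, G.Adj u v →
      IsEffRes (fun a b => if G.Adj a b then c s(a, b) else 0) u v (R s(u, v)))
    (H : V → V → ℝ) (hH0 : ∀ v, H v v = 0)
    (hH : ∀ u v, u ≠ v → H u v = 1 +
      ∑ w, ((if G.Adj u w then c s(u, w) else 0) /
        ∑ x, (if G.Adj u x then c s(u, x) else 0)) * H w v)
    (T : Finset (Sym2 V)) (hTsub : ↑T ⊆ G.edgeSet)
    (hTtree : (SimpleGraph.fromEdgeSet (↑T : Set (Sym2 V))).IsTree) :
    ∃ σ : Fin (Fintype.card V) ≃ V,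
      cycSum H σ ≤ 2 * (∑ e ∈ G.edgeFinset, c e) * ∑ e ∈ T, R e := by
  classical
  have hVne : Nonempty V := hG.nonempty
  by_cases hcard1 : Fintype.card V = 1
  · -- trivial one-vertex case
    have hsub : Subsingleton V := by
      rw [← Fintype.card_le_one_iff_subsingleton, hcard1]
    refine ⟨(Fintype.equivFin V).symm, ?_⟩
    have hcyc : cycSum H (Fintype.equivFin V).symm = 0 := by
      apply Finset.sum_eq_zero
      intro i _
      have heq : ((Fintype.equivFin V).symm ⟨(i.val + 1) % Fintype.card V, Nat.mod_lt _ i.pos⟩)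
          = (Fintype.equivFin V).symm i := Subsingleton.elim _ _
      rw [heq, hH0]
    rw [hcyc]
    have hT0 : T = ∅ := by
      apply Finset.eq_empty_of_forall_notMem
      intro e
      induction e using Sym2.ind with
      | _ a b =>
        intro he
        exact (G.mem_edgeSet.1 (hTsub he)).ne (Subsingleton.elim a b)
    rw [hT0]
    simp
  · have hcard2 : 1 < Fintype.card V := by
      have := Fintype.card_pos (α := V); omega
    set F : V → V → ℝ := fun a b => if G.Adj a b then c s(a, b) else 0 with hF
    have hH' : ∀ u v, u ≠ v → H u v = 1 + ∑ w, (F u w / ∑ x, F u x) * H w v := by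
      intro u v huv
      simp only [hF]
      exact hH u v huv
    have hR' : ∀ u v, G.Adj u v → IsEffRes F u v (R s(u, v)) := by
      intro u v h
      rw [hF]
      exact hR u v h
    have hsymm : ∀ a b, F a b = F b a := by
      intro a b
      simp only [hF]
      by_cases h : G.Adj a b
      · rw [if_pos h, if_pos h.symm, Sym2.eq_swap]
      · rw [if_neg h, if_neg (fun h' => h h'.symm)]
    have hFnn : ∀ a b, 0 ≤ F a b := by
      intro a b
      simp only [hF]
      by_cases h : G.Adj a b
      · rw [if_pos h]; exact le_of_lt (hc _ (G.mem_edgeSet.2 h))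
      · rw [if_neg h]
    have hFpos : ∀ a b, G.Adj a b → 0 < F a b := by
      intro a b h
      simp only [hF]
      rw [if_pos h]
      exact hc _ (G.mem_edgeSet.2 h)
    have hconn_r : ∀ u v, Relation.ReflTransGen (fun a b => 0 < F a b) u v := by
      intro u v
      have h := (SimpleGraph.reachable_iff_reflTransGen u v).1 (hG.preconnected u v)
      exact Relation.ReflTransGen.mono (fun a b hab => hFpos a b hab) _ _ h
    have hDpos : ∀ w, 0 < ∑ x, F w x := by
      intro w
      obtain ⟨t, htw⟩ := Fintype.exists_ne_of_one_lt_card hcard2 w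
      rcases (hconn_r w t).cases_head with h | ⟨x, hx, -⟩
      · exact absurd h.symm htw
      · exact Finset.sum_pos' (fun x _ => hFnn w x) ⟨x, Finset.mem_univ x, hx⟩
    have hp : ∀ w x, 0 ≤ F w x / ∑ y, F w y :=
      fun w x => div_nonneg (hFnn w x) (le_of_lt (hDpos w))
    have hrow : ∀ w, ∑ x, F w x / ∑ y, F w y = 1 := by
      intro w
      rw [← Finset.sum_div]
      exact div_self (ne_of_gt (hDpos w))
    have hPr : ∀ w x, 0 < F w x → 0 < F w x / ∑ y, F w y :=
      fun w x h => div_pos h (hDpos w)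
    have hHnn : ∀ u v, 0 ≤ H u v :=
      CycAux.H_nonneg (P := fun w x => F w x / ∑ y, F w y) hp hrow H hH0 hH'
    have htri : ∀ a b c', H a c' ≤ H a b + H b c' :=
      CycAux.H_triangle (r := fun a b => 0 < F a b)
        (P := fun w x => F w x / ∑ y, F w y) hp hrow hPr hconn_r H hH0 hH'
    -- facts about the spanning tree
    have hTedge : ∀ e ∈ T, ∃ a b, a ≠ b ∧ a ∈ Finset.univ ∧ b ∈ Finset.univ ∧ e = s(a, b) := by
      intro e
      induction e using Sym2.ind with
      | _ a b =>
        intro he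
        exact ⟨a, b, (G.mem_edgeSet.1 (hTsub he)).ne, Finset.mem_univ a,
          Finset.mem_univ b, rfl⟩
    have hTconn : ∀ u ∈ Finset.univ, ∀ v ∈ (Finset.univ : Finset V),
        Relation.ReflTransGen (fun a b => s(a, b) ∈ T) u v := by
      intro u _ v _
      have h := (SimpleGraph.reachable_iff_reflTransGen u v).1
        (hTtree.isConnected.preconnected u v)
      exact Relation.ReflTransGen.mono
        (fun a b hab => ((SimpleGraph.fromEdgeSet_adj _).1 hab).1) _ _ h
    letI : DecidableRel (SimpleGraph.fromEdgeSet (↑T : Set (Sym2 V))).Adj := fun a b =>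
      decidable_of_iff (s(a, b) ∈ T ∧ a ≠ b)
        (by rw [SimpleGraph.fromEdgeSet_adj]; simp)
    have hTcard : T.card + 1 = Fintype.card V := by
      have hfe : (SimpleGraph.fromEdgeSet (↑T : Set (Sym2 V))).edgeFinset = T := by
        apply Finset.coe_injective
        rw [SimpleGraph.coe_edgeFinset, SimpleGraph.edgeSet_fromEdgeSet]
        ext e
        simp only [Set.mem_diff, Set.mem_setOf_eq, Finset.mem_coe]
        constructor
        · exact fun h => h.1
        · intro he
          exact ⟨he, SimpleGraph.not_isDiag_of_mem_edgeSet G (hTsub he)⟩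
      have h := hTtree.card_edgeFinset
      rwa [hfe] at h
    -- the commute-time identity on tree edges
    have hcomm : ∀ e ∈ T,
        (Sym2.lift ⟨fun u v => H u v + H v u, fun _ _ => by ring⟩ : Sym2 V → ℝ) e
          = 2 * (∑ e ∈ G.edgeFinset, c e) * R e := by
      intro e
      induction e using Sym2.ind with
      | _ a b =>
        intro he
        have hadj : G.Adj a b := G.mem_edgeSet.1 (hTsub he)
        have hcid := CycAux.commute_identity F hsymm hFnn hDpos hconn_r H hH0 hH'
          a b hadj.ne (R s(a, b)) (hR' a b hadj)
        have hhs : ∑ w, ∑ x, F w x = 2 * ∑ e ∈ G.edgeFinset, c e := by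
          simp only [hF]
          exact CycAux.handshake G c
        rw [Sym2.lift_mk]
        show H a b + H b a = _
        rw [hcid, hhs]
    -- the cyclic ordering coming from the leaf-removal induction
    obtain ⟨l, hlne, hlnd, hlfin, hlsum⟩ :=
      CycAux.tree_list H hH0 hHnn htri (Fintype.card V) Finset.univ T
        (by rw [Finset.card_univ]) Finset.univ_nonempty hTedge hTconn
        (by rw [Finset.card_univ]; exact hTcard)
    have hmem : ∀ x, x ∈ l := fun x => by
      rw [← List.mem_toFinset, hlfin]; exact Finset.mem_univ x
    have hlen : l.length = Fintype.card V := by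
      rw [← List.toFinset_card_of_nodup hlnd, hlfin, Finset.card_univ]
    refine ⟨(finCongr hlen.symm).trans (List.Nodup.getEquivOfForallMemList l hlnd hmem), ?_⟩
    have v₀ : V := Classical.arbitrary V
    have hσ : ∀ i : Fin (Fintype.card V),
        ((finCongr hlen.symm).trans (List.Nodup.getEquivOfForallMemList l hlnd hmem)) i
          = l.getD i.val v₀ := by
      intro i
      have hlt : (i : ℕ) < l.length := by rw [hlen]; exact i.isLt
      simp only [Equiv.trans_apply, finCongr_apply]
      rw [List.getD_eq_getElem l v₀ hlt]
      rfl
    have hcalc : cycSum H ((finCongr hlen.symm).trans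
        (List.Nodup.getEquivOfForallMemList l hlnd hmem))
        = ∑ i ∈ Finset.range (Fintype.card V),
            H (l.getD i v₀) (l.getD ((i + 1) % Fintype.card V) v₀) := by
      rw [cycSum, ← Fin.sum_univ_eq_sum_range
        (fun j => H (l.getD j v₀) (l.getD ((j + 1) % Fintype.card V) v₀)) (Fintype.card V)]
      refine Finset.sum_congr rfl fun i _ => ?_
      rw [hσ i, hσ ⟨(i.val + 1) % Fintype.card V, Nat.mod_lt _ i.pos⟩]
    rw [hcalc]
    have hchain : ∑ i ∈ Finset.range (Fintype.card V),
        H (l.getD i v₀) (l.getD ((i + 1) % Fintype.card V) v₀)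
        = CycAux.chainSum H (l ++ l.take 1) := by
      rw [← hlen]
      exact CycAux.cyc_sum_eq H l hlne v₀
    rw [hchain]
    calc CycAux.chainSum H (l ++ l.take 1)
        ≤ ∑ e ∈ T, (Sym2.lift ⟨fun u v => H u v + H v u, fun _ _ => by ring⟩ : Sym2 V → ℝ) e :=
          hlsum
      _ = ∑ e ∈ T, 2 * (∑ e ∈ G.edgeFinset, c e) * R e := Finset.sum_congr rfl hcomm
      _ = 2 * (∑ e ∈ G.edgeFinset, c e) * ∑ e ∈ T, R e := (Finset.mul_sum _ _ _).symm
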